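/- Let V be a 𝔤-module, 𝔤 = 𝔰𝔳(0), which is a free U(𝔥)-module of rank 1 with generator w. For each m ∈ ℤ let a_m ∈ ℂ[x,y,z] be the unique polynomial with ρ(M_m)·w = a_m(ρ(L₀),ρ(M₀),ρ(Y₀))·w. Then a_m does not involve the variable x, i.e., a_m lies in the subring ℂ[y,z] of ℂ[x,y,z]. -/

import Mathlib

/-- Evaluation of a polynomial `u(x,y,z)` at three operators `A, B, C`, applied to a
vector `w`: `u(A,B,C)·w` (when `A,B,C` pairwise commute, this is the usual substitution). -/
noncomputable def evalP {V : Type*} [AddCommGroup V] [Module ℂ V]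
    (A B C : Module.End ℂ V) (w : V) (u : MvPolynomial (Fin 3) ℂ) : V :=
  (AddMonoidAlgebra.coeff u).sum fun d c => c • ((A ^ d 0 * B ^ d 1 * C ^ d 2) w)

section Sv14Aux

open Polynomial in
lemma sv14_tay_coeff_top {D : Type*} [CommRing D] (p : D[X]) (r : D) :
    (taylor r p).coeff p.natDegree = p.coeff p.natDegree := by
  rw [taylor_coeff]
  have h0 : (hasseDeriv p.natDegree p).natDegree = 0 := by
    have := Polynomial.natDegree_hasseDeriv_le p p.natDegree
    omega
  rw [Polynomial.eq_C_of_natDegree_eq_zero h0, eval_C, hasseDeriv_coeff]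
  simp

open Polynomial in
lemma sv14_tay_coeff_pred {D : Type*} [CommRing D] (p : D[X]) (r : D) (h1 : 1 ≤ p.natDegree) :
    (taylor r p).coeff (p.natDegree - 1)
      = p.coeff (p.natDegree - 1) + (p.natDegree : D) * r * p.coeff p.natDegree := by
  rw [taylor_coeff]
  have h0 : (hasseDeriv (p.natDegree - 1) p).natDegree ≤ 1 := by
    have := Polynomial.natDegree_hasseDeriv_le p (p.natDegree - 1)
    omega
  have c1 : (hasseDeriv (p.natDegree - 1) p).coeff 1 = (p.natDegree : D) * p.coeff p.natDegree := by
    rw [hasseDeriv_coeff]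
    have h2 : 1 + (p.natDegree - 1) = p.natDegree := by omega
    rw [h2]
    congr 1
    rw [show p.natDegree - 1 = p.natDegree - 1 from rfl, Nat.choose_symm h1, Nat.choose_one_right]
  have c0 : (hasseDeriv (p.natDegree - 1) p).coeff 0 = p.coeff (p.natDegree - 1) := by
    rw [hasseDeriv_coeff]
    have h2 : 0 + (p.natDegree - 1) = p.natDegree - 1 := by omega
    rw [h2, Nat.choose_self]
    simp
  rw [Polynomial.eq_X_add_C_of_natDegree_le_one h0, c1, c0]
  simp [eval_add, eval_mul, eval_C, eval_X]
  ring

open Polynomial in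
lemma sv14_coeff_mul_pred {D : Type*} [CommRing D] (f g : D[X]) (df dg : ℕ)
    (hf : f.natDegree ≤ df) (hg : g.natDegree ≤ dg) (h1 : 1 ≤ df) (h2 : 1 ≤ dg) :
    (f * g).coeff (df + dg - 1)
      = f.coeff (df - 1) * g.coeff dg + f.coeff df * g.coeff (dg - 1) := by
  rw [Polynomial.coeff_mul]
  have hsub : ({(df - 1, dg), (df, dg - 1)} : Finset (ℕ × ℕ))
      ⊆ Finset.HasAntidiagonal.antidiagonal (df + dg - 1) := by
    intro x hx
    simp only [Finset.mem_insert, Finset.mem_singleton] at hx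
    rcases hx with h | h <;> subst h <;> simp [Finset.mem_antidiagonal] <;> omega
  rw [← Finset.sum_subset hsub]
  · rw [Finset.sum_pair (by simp; omega)]
  · intro x hx hnx
    simp only [Finset.HasAntidiagonal.mem_antidiagonal] at hx
    simp only [Finset.mem_insert, Finset.mem_singleton] at hnx
    push_neg at hnx
    rcases lt_or_ge df x.1 with h | h
    · rw [Polynomial.coeff_eq_zero_of_natDegree_lt (lt_of_le_of_lt hf h), zero_mul]
    · have : dg < x.2 := by
        rcases hnx with ⟨hn1, hn2⟩
        have hx1 : x.1 ≠ df - 1 := fun hh => hn1 (Prod.ext hh (by omega))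
        have hx2 : x.1 ≠ df := fun hh => hn2 (Prod.ext hh (by omega))
        omega
      rw [Polynomial.coeff_eq_zero_of_natDegree_lt (lt_of_le_of_lt hg this), mul_zero]

open Polynomial in
lemma sv14_sublemA {D : Type*} [CommRing D] [IsDomain D] (P Q : D[X]) (r s : D)
    (hQ : Q ≠ 0) (hd : 1 ≤ P.natDegree)
    (h : P.comp (X - C r) * Q = Q.comp (X - C s) * P) :
    (P.natDegree : D) * r = (Q.natDegree : D) * s := by
  have hP : P ≠ 0 := by intro h0; rw [h0] at hd; simp at hd
  have hPl : P.coeff P.natDegree ≠ 0 := by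
    rw [← Polynomial.leadingCoeff]; exact Polynomial.leadingCoeff_ne_zero.mpr hP
  have hQl : Q.coeff Q.natDegree ≠ 0 := by
    rw [← Polynomial.leadingCoeff]; exact Polynomial.leadingCoeff_ne_zero.mpr hQ
  have htayP : P.comp (X - C r) = taylor (-r) P := by
    rw [taylor_apply, map_neg, sub_eq_add_neg]
  have htayQ : Q.comp (X - C s) = taylor (-s) Q := by
    rw [taylor_apply, map_neg, sub_eq_add_neg]
  rw [htayP, htayQ] at h
  set d := P.natDegree with hdd
  set e := Q.natDegree with hee
  rcases Nat.eq_zero_or_pos e with he | he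
  · -- Q is a constant
    have hQC : Q = C (Q.coeff 0) := Polynomial.eq_C_of_natDegree_eq_zero he
    have hC0 : (C (Q.coeff 0) : D[X]) ≠ 0 := by
      rw [Ne, Polynomial.C_eq_zero]
      rw [he] at hQl; exact hQl
    have htQ : taylor (-s) Q = Q := by
      conv_lhs => rw [hQC]
      rw [taylor_C, ← hQC]
    rw [htQ] at h
    conv_lhs at h => rw [hQC]
    have hcan : taylor (-r) P = P :=
      mul_right_cancel₀ hC0 (by
        rw [h]
        conv_lhs => rw [hQC]
        ring)
    have htp := sv14_tay_coeff_pred P (-r) hd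
    rw [hcan] at htp
    have h2 : ((d : D) * r) * P.coeff d = 0 := by linear_combination htp
    have h3 : (d:D) * r = 0 := by
      rcases mul_eq_zero.mp h2 with h4 | h4
      · exact h4
      · exact absurd h4 hPl
    rw [h3, he]; simp
  · -- e ≥ 1
    have hdP : ((taylor (-r)) P).natDegree ≤ d := by rw [natDegree_taylor]
    have hdQ : ((taylor (-s)) Q).natDegree ≤ e := by rw [natDegree_taylor]
    have hcL := sv14_coeff_mul_pred (taylor (-r) P) Q d e hdP (le_refl e) hd he
    have hcR := sv14_coeff_mul_pred (taylor (-s) Q) P e d hdQ (le_refl d) he hd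
    rw [Nat.add_comm e d] at hcR
    have hc : (taylor (-r) P).coeff (d-1) * Q.coeff e + (taylor (-r) P).coeff d * Q.coeff (e-1)
        = (taylor (-s) Q).coeff (e-1) * P.coeff d + (taylor (-s) Q).coeff e * P.coeff (d-1) := by
      rw [← hcL, ← hcR, h]
    have e1 : (taylor (-r) P).coeff d = P.coeff d := by
      have := sv14_tay_coeff_top P (-r); rwa [← hdd] at this
    have e2 : (taylor (-r) P).coeff (d-1) = P.coeff (d-1) + (d:D)*(-r)*P.coeff d := by
      have := sv14_tay_coeff_pred P (-r) hd; rwa [← hdd] at this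
    have e3 : (taylor (-s) Q).coeff e = Q.coeff e := by
      have := sv14_tay_coeff_top Q (-s); rwa [← hee] at this
    have e4 : (taylor (-s) Q).coeff (e-1) = Q.coeff (e-1) + (e:D)*(-s)*Q.coeff e := by
      have := sv14_tay_coeff_pred Q (-s) he; rwa [← hee] at this
    rw [e1, e2, e3, e4] at hc
    have key : ((d:D) * r - (e:D) * s) * (P.coeff d * Q.coeff e) = 0 := by
      ring_nf; linear_combination -hc
    have hne := mul_ne_zero hPl hQl
    have h5 : (d:D)*r - (e:D)*s = 0 := by
      rcases mul_eq_zero.mp key with h4 | h4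
      · exact h4
      · exact absurd h4 hne
    linear_combination h5

open MvPolynomial

/-- The substitution `x ↦ x - n` on `ℂ[x,y,z]`. -/
noncomputable def svTau (n : ℂ) : MvPolynomial (Fin 3) ℂ →ₐ[ℂ] MvPolynomial (Fin 3) ℂ :=
  aeval ![X 0 - C n, X 1, X 2]

lemma svTau_X0 (n : ℂ) : svTau n (X 0) = X 0 - C n := by rw [svTau, aeval_X]; rfl
lemma svTau_X1 (n : ℂ) : svTau n (X 1) = X 1 := by rw [svTau, aeval_X]; rfl
lemma svTau_X2 (n : ℂ) : svTau n (X 2) = X 2 := by rw [svTau, aeval_X]; rfl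
lemma svTau_C (n c : ℂ) : svTau n (C c) = C c := by
  rw [svTau]; simp [algebraMap_eq]

noncomputable abbrev svPhi := MvPolynomial.finSuccEquiv ℂ 2

lemma svPhi_tau (n : ℂ) (p : MvPolynomial (Fin 3) ℂ) :
    svPhi (svTau n p) = Polynomial.aeval (R := MvPolynomial (Fin 2) ℂ)
      (Polynomial.X - Polynomial.C (MvPolynomial.C n)) (svPhi p) := by
  have hhom : ∀ q : MvPolynomial (Fin 3) ℂ,
      (svPhi.toAlgHom.comp (svTau n)) q =
      (((Polynomial.aeval (R := MvPolynomial (Fin 2) ℂ)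
        (Polynomial.X - Polynomial.C (MvPolynomial.C n))).restrictScalars ℂ).comp
          svPhi.toAlgHom) q := by
    intro q
    refine congrFun (congrArg DFunLike.coe ?_) q
    apply MvPolynomial.algHom_ext
    intro i
    fin_cases i
    · show svPhi (svTau n (X 0)) = Polynomial.aeval
          (Polynomial.X - Polynomial.C (MvPolynomial.C n)) (svPhi (X 0))
      rw [svTau_X0]
      rw [map_sub, finSuccEquiv_X_zero]
      have hC : svPhi ((C n : MvPolynomial (Fin 3) ℂ)) = Polynomial.C (C n) := by
        simpa using svPhi.commutes n
      rw [hC]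
      simp
    · show svPhi (svTau n (X 1)) = Polynomial.aeval
          (Polynomial.X - Polynomial.C (MvPolynomial.C n)) (svPhi (X 1))
      rw [svTau_X1]
      rw [show (X 1 : MvPolynomial (Fin 3) ℂ) = X (Fin.succ 0) from rfl,
        finSuccEquiv_X_succ]
      simp [Polynomial.aeval_C]
    · show svPhi (svTau n (X 2)) = Polynomial.aeval
          (Polynomial.X - Polynomial.C (MvPolynomial.C n)) (svPhi (X 2))
      rw [svTau_X2]
      rw [show (X 2 : MvPolynomial (Fin 3) ℂ) = X (Fin.succ 1) from rfl,
        finSuccEquiv_X_succ]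
      simp [Polynomial.aeval_C]
  exact hhom p

section EvalPLemmas
variable {V : Type*} [AddCommGroup V] [Module ℂ V] (A B Cc : Module.End ℂ V) (w : V)

lemma sv14_evalP_monomial (d : Fin 3 →₀ ℕ) (c : ℂ) :
    evalP A B Cc w (monomial d c) = c • ((A ^ d 0 * B ^ d 1 * Cc ^ d 2) w) := by
  unfold evalP
  rw [show AddMonoidAlgebra.coeff (monomial d c) = Finsupp.single d c from rfl]
  erw [Finsupp.sum_single_index (by simp)]

lemma sv14_evalP_add (p q : MvPolynomial (Fin 3) ℂ) :
    evalP A B Cc w (p + q) = evalP A B Cc w p + evalP A B Cc w q := by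
  unfold evalP
  rw [AddMonoidAlgebra.coeff_add]
  exact Finsupp.sum_add_index (by simp) (by intros; rw [add_smul])

lemma sv14_evalP_smul (c : ℂ) (p : MvPolynomial (Fin 3) ℂ) :
    evalP A B Cc w (c • p) = c • evalP A B Cc w p := by
  unfold evalP
  rw [AddMonoidAlgebra.coeff_smul]
  rw [Finsupp.sum_smul_index (by simp)]
  rw [Finsupp.smul_sum]
  apply Finsupp.sum_congr
  intros d _
  rw [smul_smul]

lemma sv14_evalP_C (c : ℂ) : evalP A B Cc w (MvPolynomial.C c) = c • w := by
  rw [show (MvPolynomial.C c : MvPolynomial (Fin 3) ℂ) = monomial 0 c from rfl,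
    sv14_evalP_monomial]
  simp

lemma sv14_evalP_one : evalP A B Cc w 1 = w := by
  rw [show (1 : MvPolynomial (Fin 3) ℂ) = MvPolynomial.C 1 from rfl, sv14_evalP_C, one_smul]

lemma sv14_evalP_sub (p q : MvPolynomial (Fin 3) ℂ) :
    evalP A B Cc w (p - q) = evalP A B Cc w p - evalP A B Cc w q := by
  have h := sv14_evalP_add A B Cc w q (p - q)
  rw [add_sub_cancel] at h
  rw [h]; abel

lemma sv14_X_mul_monomial (i : Fin 3) (d : Fin 3 →₀ ℕ) (c : ℂ) :
    X i * monomial d c = monomial (Finsupp.single i 1 + d) c := by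
  rw [X, monomial_mul, one_mul]

lemma sv14_evalP_X0_mul (p : MvPolynomial (Fin 3) ℂ) :
    evalP A B Cc w (X 0 * p) = A (evalP A B Cc w p) := by
  induction p using MvPolynomial.induction_on' with
  | monomial d c =>
    rw [sv14_X_mul_monomial, sv14_evalP_monomial, sv14_evalP_monomial]
    have h0 : ((Finsupp.single (0:Fin 3) 1 + d) : Fin 3 →₀ ℕ) 0 = d 0 + 1 := by
      rw [Finsupp.add_apply, Finsupp.single_apply]; simp; try omega
    have h1 : ((Finsupp.single (0:Fin 3) 1 + d) : Fin 3 →₀ ℕ) 1 = d 1 := by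
      rw [Finsupp.add_apply, Finsupp.single_apply]; simp; try omega
    have h2 : ((Finsupp.single (0:Fin 3) 1 + d) : Fin 3 →₀ ℕ) 2 = d 2 := by
      rw [Finsupp.add_apply, Finsupp.single_apply]; simp; try omega
    rw [h0, h1, h2, map_smul]
    congr 1
    have key : A ^ (d 0 + 1) * B ^ d 1 * Cc ^ d 2 = A * (A ^ d 0 * B ^ d 1 * Cc ^ d 2) := by
      rw [pow_succ', mul_assoc, mul_assoc, mul_assoc]
    rw [key]
    rfl
  | add p q hp hq => rw [mul_add, sv14_evalP_add, sv14_evalP_add, hp, hq, map_add]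

lemma sv14_evalP_X1_mul (hAB : Commute A B) (p : MvPolynomial (Fin 3) ℂ) :
    evalP A B Cc w (X 1 * p) = B (evalP A B Cc w p) := by
  induction p using MvPolynomial.induction_on' with
  | monomial d c =>
    rw [sv14_X_mul_monomial, sv14_evalP_monomial, sv14_evalP_monomial]
    have h0 : ((Finsupp.single (1:Fin 3) 1 + d) : Fin 3 →₀ ℕ) 0 = d 0 := by
      rw [Finsupp.add_apply, Finsupp.single_apply]; simp; try omega
    have h1 : ((Finsupp.single (1:Fin 3) 1 + d) : Fin 3 →₀ ℕ) 1 = d 1 + 1 := by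
      rw [Finsupp.add_apply, Finsupp.single_apply]; simp; try omega
    have h2 : ((Finsupp.single (1:Fin 3) 1 + d) : Fin 3 →₀ ℕ) 2 = d 2 := by
      rw [Finsupp.add_apply, Finsupp.single_apply]; simp; try omega
    rw [h0, h1, h2, map_smul]
    congr 1
    have key : A ^ d 0 * B ^ (d 1 + 1) * Cc ^ d 2 = B * (A ^ d 0 * B ^ d 1 * Cc ^ d 2) := by
      symm
      rw [← mul_assoc, ← mul_assoc, (hAB.symm.pow_right (d 0)).eq, pow_succ',
        mul_assoc (A ^ d 0) B (B ^ d 1)]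
    rw [key]
    rfl
  | add p q hp hq => rw [mul_add, sv14_evalP_add, sv14_evalP_add, hp, hq, map_add]

lemma sv14_evalP_X2_mul (hAC : Commute A Cc) (hBC : Commute B Cc) (p : MvPolynomial (Fin 3) ℂ) :
    evalP A B Cc w (X 2 * p) = Cc (evalP A B Cc w p) := by
  induction p using MvPolynomial.induction_on' with
  | monomial d c =>
    rw [sv14_X_mul_monomial, sv14_evalP_monomial, sv14_evalP_monomial]
    have h0 : ((Finsupp.single (2:Fin 3) 1 + d) : Fin 3 →₀ ℕ) 0 = d 0 := by
      rw [Finsupp.add_apply, Finsupp.single_apply]; simp; try omega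
    have h1 : ((Finsupp.single (2:Fin 3) 1 + d) : Fin 3 →₀ ℕ) 1 = d 1 := by
      rw [Finsupp.add_apply, Finsupp.single_apply]; simp; try omega
    have h2 : ((Finsupp.single (2:Fin 3) 1 + d) : Fin 3 →₀ ℕ) 2 = d 2 + 1 := by
      rw [Finsupp.add_apply, Finsupp.single_apply]; simp; try omega
    rw [h0, h1, h2, map_smul]
    congr 1
    have key : A ^ d 0 * B ^ d 1 * Cc ^ (d 2 + 1) = Cc * (A ^ d 0 * B ^ d 1 * Cc ^ d 2) := by
      symm
      calc Cc * (A ^ d 0 * B ^ d 1 * Cc ^ d 2)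
          = ((Cc * A ^ d 0) * B ^ d 1) * Cc ^ d 2 := by rw [← mul_assoc, ← mul_assoc]
        _ = ((A ^ d 0 * Cc) * B ^ d 1) * Cc ^ d 2 := by rw [(hAC.symm.pow_right (d 0)).eq]
        _ = (A ^ d 0 * (Cc * B ^ d 1)) * Cc ^ d 2 := by rw [mul_assoc (A ^ d 0) Cc (B ^ d 1)]
        _ = (A ^ d 0 * (B ^ d 1 * Cc)) * Cc ^ d 2 := by rw [(hBC.symm.pow_right (d 1)).eq]
        _ = A ^ d 0 * B ^ d 1 * (Cc ^ d 2 * Cc) := by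
              rw [← mul_assoc, mul_assoc (A ^ d 0 * B ^ d 1) Cc (Cc ^ d 2),
                ((Commute.refl Cc).pow_right (d 2)).eq]
        _ = A ^ d 0 * B ^ d 1 * Cc ^ (d 2 + 1) := by rw [pow_succ]
    rw [key]
    rfl
  | add p q hp hq => rw [mul_add, sv14_evalP_add, sv14_evalP_add, hp, hq, map_add]

lemma sv14_opN_evalP (hAB : Commute A B) (hAC : Commute A Cc) (hBC : Commute B Cc)
    (N : Module.End ℂ V) (n : ℂ) (a : MvPolynomial (Fin 3) ℂ)
    (hNA : N * A = A * N - n • N) (hNB : N * B = B * N) (hNC : N * Cc = Cc * N)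
    (hNw : N w = evalP A B Cc w a) :
    ∀ p, N (evalP A B Cc w p) = evalP A B Cc w (svTau n p * a) := by
  intro p
  induction p using MvPolynomial.induction_on with
  | C c =>
    rw [sv14_evalP_C, map_smul, hNw, svTau_C, ← MvPolynomial.smul_eq_C_mul, sv14_evalP_smul]
  | add p q hp hq =>
    rw [sv14_evalP_add, map_add, hp, hq, map_add, add_mul, sv14_evalP_add]
  | mul_X p i hp =>
    rw [mul_comm p (X i)]
    fin_cases i
    · show N (evalP A B Cc w (X 0 * p)) = evalP A B Cc w (svTau n (X 0 * p) * a)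
      rw [sv14_evalP_X0_mul]
      have h1 : N (A (evalP A B Cc w p)) = (N * A) (evalP A B Cc w p) := rfl
      rw [h1, hNA, LinearMap.sub_apply, LinearMap.smul_apply]
      have h2 : (A * N) (evalP A B Cc w p) = A (N (evalP A B Cc w p)) := rfl
      rw [h2, hp, ← sv14_evalP_X0_mul, ← sv14_evalP_smul, ← sv14_evalP_sub]
      congr 1
      rw [map_mul, svTau_X0, MvPolynomial.smul_eq_C_mul]
      ring
    · show N (evalP A B Cc w (X 1 * p)) = evalP A B Cc w (svTau n (X 1 * p) * a)
      rw [sv14_evalP_X1_mul A B Cc w hAB]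
      have h1 : N (B (evalP A B Cc w p)) = (N * B) (evalP A B Cc w p) := rfl
      rw [h1, hNB]
      have h2 : (B * N) (evalP A B Cc w p) = B (N (evalP A B Cc w p)) := rfl
      rw [h2, hp, ← sv14_evalP_X1_mul A B Cc w hAB]
      congr 1
      rw [map_mul, svTau_X1]
      ring
    · show N (evalP A B Cc w (X 2 * p)) = evalP A B Cc w (svTau n (X 2 * p) * a)
      rw [sv14_evalP_X2_mul A B Cc w hAC hBC]
      have h1 : N (Cc (evalP A B Cc w p)) = (N * Cc) (evalP A B Cc w p) := rfl
      rw [h1, hNC]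
      have h2 : (Cc * N) (evalP A B Cc w p) = Cc (N (evalP A B Cc w p)) := rfl
      rw [h2, hp, ← sv14_evalP_X2_mul A B Cc w hAC hBC]
      congr 1
      rw [map_mul, svTau_X2]
      ring

lemma sv14_opS_evalP (hAB : Commute A B) (hAC : Commute A Cc) (hBC : Commute B Cc)
    (S N : Module.End ℂ V) (n : ℂ) (a y : MvPolynomial (Fin 3) ℂ)
    (hSA : S * A = A * S - n • S) (hSB : S * B = B * S) (hSC : S * Cc = Cc * S - n • N)
    (hN : ∀ p, N (evalP A B Cc w p) = evalP A B Cc w (svTau n p * a))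
    (hSw : S w = evalP A B Cc w y) :
    ∀ p, S (evalP A B Cc w p) =
      evalP A B Cc w (svTau n p * y - n • (svTau n (pderiv 2 p) * a)) := by
  intro p
  induction p using MvPolynomial.induction_on with
  | C c =>
    rw [sv14_evalP_C, map_smul, hSw]
    rw [show svTau n (MvPolynomial.C c) * y - n • (svTau n (pderiv 2 (MvPolynomial.C c)) * a)
        = c • y by
      rw [svTau_C, pderiv_C, map_zero, zero_mul, smul_zero, sub_zero,
        MvPolynomial.smul_eq_C_mul]]
    rw [sv14_evalP_smul]
  | add p q hp hq =>
    rw [sv14_evalP_add, map_add, hp, hq, ← sv14_evalP_add]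
    congr 1
    simp only [map_add, MvPolynomial.smul_eq_C_mul]
    ring
  | mul_X p i hp =>
    rw [mul_comm p (X i)]
    fin_cases i
    · show S (evalP A B Cc w (X 0 * p))
        = evalP A B Cc w (svTau n (X 0 * p) * y - n • (svTau n (pderiv 2 (X 0 * p)) * a))
      rw [sv14_evalP_X0_mul]
      have h1 : S (A (evalP A B Cc w p)) = (S * A) (evalP A B Cc w p) := rfl
      rw [h1, hSA, LinearMap.sub_apply, LinearMap.smul_apply]
      have h2 : (A * S) (evalP A B Cc w p) = A (S (evalP A B Cc w p)) := rfl
      rw [h2, hp, ← sv14_evalP_X0_mul, ← sv14_evalP_smul, ← sv14_evalP_sub]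
      congr 1
      rw [map_mul, svTau_X0, pderiv_mul, pderiv_X_of_ne (show (0:Fin 3) ≠ 2 by decide),
        zero_mul, zero_add, map_mul, svTau_X0]
      simp only [MvPolynomial.smul_eq_C_mul]
      ring
    · show S (evalP A B Cc w (X 1 * p))
        = evalP A B Cc w (svTau n (X 1 * p) * y - n • (svTau n (pderiv 2 (X 1 * p)) * a))
      rw [sv14_evalP_X1_mul A B Cc w hAB]
      have h1 : S (B (evalP A B Cc w p)) = (S * B) (evalP A B Cc w p) := rfl
      rw [h1, hSB]
      have h2 : (B * S) (evalP A B Cc w p) = B (S (evalP A B Cc w p)) := rfl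
      rw [h2, hp, ← sv14_evalP_X1_mul A B Cc w hAB]
      congr 1
      rw [map_mul, svTau_X1, pderiv_mul, pderiv_X_of_ne (show (1:Fin 3) ≠ 2 by decide),
        zero_mul, zero_add, map_mul, svTau_X1]
      simp only [MvPolynomial.smul_eq_C_mul]
      ring
    · show S (evalP A B Cc w (X 2 * p))
        = evalP A B Cc w (svTau n (X 2 * p) * y - n • (svTau n (pderiv 2 (X 2 * p)) * a))
      rw [sv14_evalP_X2_mul A B Cc w hAC hBC]
      have h1 : S (Cc (evalP A B Cc w p)) = (S * Cc) (evalP A B Cc w p) := rfl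
      rw [h1, hSC, LinearMap.sub_apply, LinearMap.smul_apply]
      have h2 : (Cc * S) (evalP A B Cc w p) = Cc (S (evalP A B Cc w p)) := rfl
      rw [h2, hp, hN p, ← sv14_evalP_X2_mul A B Cc w hAC hBC, ← sv14_evalP_smul,
        ← sv14_evalP_sub]
      refine congrArg (evalP A B Cc w) ?_
      rw [map_mul, svTau_X2, pderiv_mul, pderiv_X_self, one_mul, map_add, map_mul, svTau_X2]
      simp only [MvPolynomial.smul_eq_C_mul]
      ring

end EvalPLemmas
end Sv14Aux

open MvPolynomial

attribute [local instance 100] LieRing.ofAssociativeRing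

/-- If the `𝔰𝔳(0)`-module `V` is a free `U(𝔥)`-module of rank 1 with generator `w`, and
`a_m ∈ ℂ[x,y,z]` is the (unique) polynomial with `ρ(M_m)·w = a_m(ρL₀,ρM₀,ρY₀)·w`, then
`a_m` does not involve the variable `x`, i.e. `a_m ∈ ℂ[y,z]`. -/
theorem stmt14
    -- `𝔤 = 𝔰𝔳(0)`: a complex Lie algebra with basis `{L n, M n, Y n : n ∈ ℤ}` ...
    (g : Type*) [LieRing g] [LieAlgebra ℂ g] (L M Y : ℤ → g)
    (B : Module.Basis (Fin 3 × ℤ) ℂ g)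
    (hB : ∀ n : ℤ, B (0, n) = L n ∧ B (1, n) = M n ∧ B (2, n) = Y n)
    -- ... and the following brackets:
    (hLL : ∀ n m : ℤ, ⁅L n, L m⁆ = (((m : ℂ) - (n : ℂ))) • L (m + n))
    (hLY : ∀ n m : ℤ, ⁅L n, Y m⁆ = ((m : ℂ) - (n : ℂ) / 2) • Y (m + n))
    (hLM : ∀ n m : ℤ, ⁅L n, M m⁆ = (m : ℂ) • M (m + n))
    (hYY : ∀ n m : ℤ, ⁅Y n, Y m⁆ = (((m : ℂ) - (n : ℂ))) • M (m + n))
    (hYM : ∀ n m : ℤ, ⁅Y n, M m⁆ = 0)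
    (hMM : ∀ n m : ℤ, ⁅M n, M m⁆ = 0)
    -- a `𝔤`-module `V`:
    (V : Type*) [AddCommGroup V] [Module ℂ V] [LieRingModule g V] [LieModule ℂ g V]
    (w : V)
    (hfree : Function.Bijective (evalP (LieModule.toEnd ℂ g V (L 0))
      (LieModule.toEnd ℂ g V (M 0)) (LieModule.toEnd ℂ g V (Y 0)) w)) :
    ∀ (m : ℤ) (a : MvPolynomial (Fin 3) ℂ),
      evalP (LieModule.toEnd ℂ g V (L 0)) (LieModule.toEnd ℂ g V (M 0))
        (LieModule.toEnd ℂ g V (Y 0)) w a = ⁅M m, w⁆ →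
      MvPolynomial.degreeOf 0 a = 0 := by
  classical
  intro m a ha
  set T : g →ₗ⁅ℂ⁆ Module.End ℂ V := LieModule.toEnd ℂ g V with hT
  set E : MvPolynomial (Fin 3) ℂ → V := evalP (T (L 0)) (T (M 0)) (T (Y 0)) w with hE
  have hinj : Function.Injective E := hfree.1
  have hsurj : Function.Surjective E := hfree.2
  -- bracket tool
  have hbr : ∀ x z : g, T x * T z - T z * T x = T ⁅x, z⁆ := by
    intro x z
    rw [LieHom.map_lie, Ring.lie_def]
  have hcom : ∀ x z : g, ⁅x, z⁆ = 0 → T z * T x = T x * T z := by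
    intro x z hxz
    have h := hbr x z
    rw [hxz, map_zero T] at h
    exact (sub_eq_zero.mp h).symm
  have hrel : ∀ (x z u : g) (c : ℂ), ⁅x, z⁆ = c • u →
      T z * T x = T x * T z - c • T u := by
    intro x z u c hxz
    have h := hbr x z
    rw [hxz, map_smul T] at h
    rw [← h]; abel
  have hAB : Commute (T (L 0)) (T (M 0)) :=
    (hcom (L 0) (M 0) (by rw [hLM 0 0]; simp)).symm
  have hAC : Commute (T (L 0)) (T (Y 0)) :=
    (hcom (L 0) (Y 0) (by rw [hLY 0 0]; norm_num)).symm
  have hBC : Commute (T (M 0)) (T (Y 0)) := by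
    have := hcom (Y 0) (M 0) (hYM 0 0)
    exact this
  -- polynomials attached to M n and Y n
  set aP : ℤ → MvPolynomial (Fin 3) ℂ := fun n => Function.surjInv hsurj ⁅M n, w⁆ with haPdef
  set yP : ℤ → MvPolynomial (Fin 3) ℂ := fun n => Function.surjInv hsurj ⁅Y n, w⁆ with hyPdef
  have haP : ∀ n : ℤ, E (aP n) = ⁅M n, w⁆ := fun n => Function.surjInv_eq hsurj _
  have hyP : ∀ n : ℤ, E (yP n) = ⁅Y n, w⁆ := fun n => Function.surjInv_eq hsurj _
  have hNw : ∀ n : ℤ, T (M n) w = E (aP n) := by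
    intro n
    rw [haP n, hT, LieModule.toEnd_apply_apply]
  have hSw : ∀ n : ℤ, T (Y n) w = E (yP n) := by
    intro n
    rw [hyP n, hT, LieModule.toEnd_apply_apply]
  -- operator relations
  have hNA : ∀ n : ℤ, T (M n) * T (L 0) = T (L 0) * T (M n) - (n:ℂ) • T (M n) := by
    intro n
    exact hrel (L 0) (M n) (M n) (n:ℂ) (by rw [hLM 0 n, add_zero])
  have hNB : ∀ n : ℤ, T (M n) * T (M 0) = T (M 0) * T (M n) :=
    fun n => hcom (M 0) (M n) (hMM 0 n)
  have hNC : ∀ n : ℤ, T (M n) * T (Y 0) = T (Y 0) * T (M n) :=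
    fun n => hcom (Y 0) (M n) (hYM 0 n)
  have hSA : ∀ n : ℤ, T (Y n) * T (L 0) = T (L 0) * T (Y n) - (n:ℂ) • T (Y n) := by
    intro n
    refine hrel (L 0) (Y n) (Y n) (n:ℂ) ?_
    rw [hLY 0 n, add_zero]
    norm_num
  have hSB : ∀ n : ℤ, T (Y n) * T (M 0) = T (M 0) * T (Y n) := by
    intro n
    exact hcom (M 0) (Y n) (by rw [← lie_skew, hYM n 0, neg_zero])
  have hSC : ∀ n : ℤ, T (Y n) * T (Y 0) = T (Y 0) * T (Y n) - (n:ℂ) • T (M n) := by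
    intro n
    refine hrel (Y 0) (Y n) (M n) (n:ℂ) ?_
    rw [hYY 0 n, add_zero]
    norm_num
  -- action formulas
  have hMp : ∀ n : ℤ, ∀ p, T (M n) (E p) = E (svTau (n:ℂ) p * aP n) := by
    intro n
    exact sv14_opN_evalP (T (L 0)) (T (M 0)) (T (Y 0)) w hAB hAC hBC (T (M n)) (n:ℂ) (aP n)
      (hNA n) (hNB n) (hNC n) (hNw n)
  have hYp : ∀ n : ℤ, ∀ p, T (Y n) (E p)
      = E (svTau (n:ℂ) p * yP n - (n:ℂ) • (svTau (n:ℂ) (pderiv 2 p) * aP n)) := by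
    intro n
    exact sv14_opS_evalP (T (L 0)) (T (M 0)) (T (Y 0)) w hAB hAC hBC (T (Y n)) (T (M n)) (n:ℂ)
      (aP n) (yP n) (hSA n) (hSB n) (hSC n) (hMp n) (hSw n)
  -- Y-M commute at vector level
  have E_sub : ∀ p q, E (p - q) = E p - E q := fun p q =>
    sv14_evalP_sub (T (L 0)) (T (M 0)) (T (Y 0)) w p q
  have E_smul : ∀ (c : ℂ) (p : MvPolynomial (Fin 3) ℂ), E (c • p) = c • E p := fun c p =>
    sv14_evalP_smul (T (L 0)) (T (M 0)) (T (Y 0)) w c p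
  have hYMcomm : ∀ (n m' : ℤ) (v : V), T (Y n) (T (M m') v) = T (M m') (T (Y n) v) := by
    intro n m' v
    have h := hbr (Y n) (M m')
    rw [hYM n m', map_zero T] at h
    have h2 := sub_eq_zero.mp h
    calc T (Y n) (T (M m') v) = (T (Y n) * T (M m')) v := rfl
      _ = (T (M m') * T (Y n)) v := by rw [h2]
      _ = T (M m') (T (Y n) v) := rfl
  -- identity (E1)
  have id1 : ∀ n m' : ℤ, svTau (n:ℂ) (aP m') * yP n
      - (n:ℂ) • (svTau (n:ℂ) (pderiv 2 (aP m')) * aP n) = svTau (m':ℂ) (yP n) * aP m' := by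
    intro n m'
    apply hinj
    rw [← hYp n (aP m'), ← hMp m' (yP n), ← hNw m', ← hSw n]
    exact hYMcomm n m' w
  -- identity (E1')
  have id1' : ∀ n m' : ℤ, (n:ℂ) ≠ 0 →
      svTau (n:ℂ) (aP m') * aP n = svTau (m':ℂ) (aP n) * aP m' := by
    intro n m' hn0
    have hv := hYMcomm n m' (E (X 2))
    rw [hMp m' (X 2), hYp n (svTau (m':ℂ) (X 2) * aP m'), hYp n (X 2), hMp m'] at hv
    have raw := hinj hv
    have id1c := id1 n m'
    simp only [svTau_X2, pderiv_mul, pderiv_X_self, one_mul, map_add, map_mul, map_sub,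
      map_smul, svTau_C, map_one, pderiv_C, MvPolynomial.smul_eq_C_mul] at raw id1c
    have key : C (n:ℂ) * (svTau (n:ℂ) (aP m') * aP n)
        = C (n:ℂ) * (svTau (m':ℂ) (aP n) * aP m') := by
      linear_combination (X 2 : MvPolynomial (Fin 3) ℂ) * id1c - raw
    exact mul_left_cancel₀ (by simpa using hn0) key
  -- identity (E2)
  have id2 : ∀ n m' : ℤ,
      (svTau (n:ℂ) (yP m') * yP n - (n:ℂ) • (svTau (n:ℂ) (pderiv 2 (yP m')) * aP n))
      - (svTau (m':ℂ) (yP n) * yP m' - (m':ℂ) • (svTau (m':ℂ) (pderiv 2 (yP n)) * aP m'))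
      = ((m':ℂ) - (n:ℂ)) • aP (m' + n) := by
    intro n m'
    apply hinj
    rw [E_sub, ← hYp n (yP m'), ← hYp m' (yP n), E_smul, ← hSw n, ← hSw m']
    have h := lie_lie (Y n) (Y m') w
    rw [hYY n m', smul_lie] at h
    calc T (Y n) (T (Y m') w) - T (Y m') (T (Y n) w)
        = ⁅Y n, ⁅Y m', w⁆⁆ - ⁅Y m', ⁅Y n, w⁆⁆ := by
          rw [hT]
          simp only [LieModule.toEnd_apply_apply]
      _ = ((m':ℂ) - (n:ℂ)) • ⁅M (m' + n), w⁆ := h.symm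
      _ = ((m':ℂ) - (n:ℂ)) • E (aP (m' + n)) := by rw [haP]
  -- now the degree argument
  have hma : a = aP m := by
    apply hinj
    rw [haP, ha]
  rw [hma]
  by_contra hdeg
  have hd : 1 ≤ degreeOf 0 (aP m) := Nat.one_le_iff_ne_zero.mpr hdeg
  set n : ℤ := if 0 < m then -1 else 1 with hndef
  have hnval : n = -1 ∨ n = 1 := by
    rw [hndef]; split_ifs <;> simp
  have hn0 : (n:ℂ) ≠ 0 := by
    rcases hnval with h | h <;> rw [h] <;> norm_num
  have hdP : 1 ≤ (svPhi (aP m)).natDegree := by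
    rw [natDegree_finSuccEquiv]; exact hd
  -- generic contradiction from a sublemA conclusion
  have hcontra : ∀ e : ℕ, ((degreeOf 0 (aP m) : ℤ)) * n = (e : ℤ) * m → False := by
    intro e hZ
    rcases lt_or_ge 0 m with hm0 | hm0
    · have hn1 : n = -1 := by rw [hndef, if_pos hm0]
      rw [hn1] at hZ
      have h1 : 0 ≤ (e : ℤ) * m := mul_nonneg (by positivity) (le_of_lt hm0)
      have h2 : (1:ℤ) ≤ (degreeOf 0 (aP m) : ℤ) := by exact_mod_cast hd
      nlinarith
    · have hn1 : n = 1 := by rw [hndef, if_neg (not_lt.mpr hm0)]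
      rw [hn1] at hZ
      have h1 : (e : ℤ) * m ≤ 0 := mul_nonpos_of_nonneg_of_nonpos (by positivity) hm0
      have h2 : (1:ℤ) ≤ (degreeOf 0 (aP m) : ℤ) := by exact_mod_cast hd
      nlinarith
  -- transfer a τ-identity to a sublemA conclusion
  have htrans : ∀ q : MvPolynomial (Fin 3) ℂ, q ≠ 0 →
      svTau (n:ℂ) (aP m) * q = svTau (m:ℂ) q * aP m → False := by
    intro q hqne hid
    have hphi := congrArg svPhi hid
    simp only [map_mul] at hphi
    rw [svPhi_tau, svPhi_tau, ← Polynomial.comp_eq_aeval, ← Polynomial.comp_eq_aeval] at hphi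
    have hQne : svPhi q ≠ 0 := by
      intro h0
      exact hqne (by simpa using (map_eq_zero_iff svPhi svPhi.injective).mp h0)
    have hcon := sv14_sublemA (svPhi (aP m)) (svPhi q) (C (n:ℂ)) (C (m:ℂ)) hQne hdP hphi
    rw [natDegree_finSuccEquiv] at hcon
    have hcc : ((degreeOf 0 (aP m) : ℂ)) * (n:ℂ) = (((svPhi q).natDegree : ℂ)) * (m:ℂ) := by
      apply MvPolynomial.C_injective (Fin 2) ℂ
      rw [map_mul, map_mul]
      rw [show (MvPolynomial.C ((degreeOf 0 (aP m) : ℂ)) : MvPolynomial (Fin 2) ℂ)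
          = ((degreeOf 0 (aP m) : ℕ) : MvPolynomial (Fin 2) ℂ) from
          map_natCast (MvPolynomial.C : ℂ →+* MvPolynomial (Fin 2) ℂ) _,
        show (MvPolynomial.C (((svPhi q).natDegree : ℂ)) : MvPolynomial (Fin 2) ℂ)
          = (((svPhi q).natDegree : ℕ) : MvPolynomial (Fin 2) ℂ) from
          map_natCast (MvPolynomial.C : ℂ →+* MvPolynomial (Fin 2) ℂ) _,
        show (MvPolynomial.C ((n:ℂ)) : MvPolynomial (Fin 2) ℂ) = C ((n:ℂ)) from rfl]
      exact hcon
    exact hcontra (svPhi q).natDegree (by exact_mod_cast hcc)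
  -- Step A : aP n = 0
  have hstepA : aP n = 0 := by
    by_contra hne
    exact htrans (aP n) hne (id1' n m hn0)
  -- Step B : yP n = 0
  have hstepB : yP n = 0 := by
    by_contra hne
    have hid := id1 n m
    rw [hstepA] at hid
    simp only [mul_zero, smul_zero, sub_zero] at hid
    exact htrans (yP n) hne hid
  -- Step C : conclude aP m = 0
  have hidC := id2 n (m - n)
  rw [hstepA, hstepB] at hidC
  simp only [map_zero, mul_zero, zero_mul, smul_zero, sub_zero, zero_sub, neg_zero,
    pderiv_C] at hidC
  have hmn : m - n + n = m := by ring
  rw [hmn] at hidC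
  have hc0 : ((m - n : ℤ):ℂ) - (n:ℂ) ≠ 0 := by
    intro h0
    have : ((m - 2*n : ℤ) : ℂ) = 0 := by push_cast; push_cast at h0; linear_combination h0
    have h1 : m - 2*n = 0 := by exact_mod_cast this
    rcases hnval with h | h <;> rw [h] at h1 <;>
      [skip; skip] <;> first
      | (rw [hndef] at h; omega)
      | omega
  have hz : aP m = 0 := by
    rcases smul_eq_zero.mp hidC.symm with h | h
    · exact absurd h hc0
    · exact h
  rw [hz] at hd
  simp [degreeOf_zero] at hd
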